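/- Let A, B, D be unital C*-algebras, let T1, T2 : A → B be completely positive maps, and let S : D → A be a completely positive map. Then β(T1∘S, T2∘S) ≤ √‖S‖ · β(T1, T2), where ‖S‖ is the operator norm of S. -/

import Mathlib

open scoped Pointwise


noncomputable section

/-- A map between star algebras is *completely positive* if, for every `n`, its
entrywise application to `n × n` matrices maps positive elements (i.e. elements of the form
`star y * y`) to positive elements. -/
def IsCPMap {A B : Type*} [NonUnitalSemiring A] [StarRing A]
    [NonUnitalSemiring B] [StarRing B] (T : A → B) : Prop :=
  ∀ (n : ℕ) (x : Matrix (Fin n) (Fin n) A),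
    (∃ y : Matrix (Fin n) (Fin n) A, x = star y * y) →
      ∃ z : Matrix (Fin n) (Fin n) B, x.map T = star z * z

/-- `That : A → M₂(B)` is a cp extension of the pair `(T₁, T₂)`: it is completely positive
and its diagonal entries are `T₁` and `T₂`. -/
def IsCPExtension {A B : Type*} [CStarAlgebra A] [CStarAlgebra B]
    (T₁ T₂ : A → B) (That : A →ₗ[ℂ] Matrix (Fin 2) (Fin 2) B) : Prop :=
  IsCPMap That ∧ (∀ a : A, That a 0 0 = T₁ a) ∧ (∀ a : A, That a 1 1 = T₂ a)

/-- The Bures distance between two completely positive maps `T₁ T₂ : A → B`: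
`β(T₁,T₂) = √ inf { ‖T₁ 1 + T₂ 1 - T̂₁₂ 1 - T̂₂₁ 1‖ | T̂ a cp extension of (T₁, T₂) }`. -/
noncomputable def buresDist {A B : Type*} [CStarAlgebra A] [CStarAlgebra B]
    (T₁ T₂ : A → B) : ℝ :=
  Real.sqrt (sInf { r : ℝ | ∃ That : A →ₗ[ℂ] Matrix (Fin 2) (Fin 2) B,
    IsCPExtension T₁ T₂ That ∧ r = ‖T₁ 1 + T₂ 1 - That 1 0 1 - That 1 1 0‖ })


/-- scalar positivity from cp -/
theorem IsCPMap.exists_star_mul_self {A B : Type*} [NonUnitalSemiring A] [StarRing A]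
    [NonUnitalSemiring B] [StarRing B] {T : A → B} (hT : IsCPMap T) {a : A}
    (ha : ∃ y : A, a = star y * y) : ∃ w : B, T a = star w * w := by
  obtain ⟨y, hy⟩ := ha
  obtain ⟨z, hz⟩ := hT 1 (Matrix.of fun _ _ => a) ⟨Matrix.of fun _ _ => y, by
    ext i j
    simp [Matrix.mul_apply, Matrix.star_apply, hy]⟩
  refine ⟨z 0 0, ?_⟩
  have := congrFun (congrFun hz 0) 0
  simpa [Matrix.mul_apply, Matrix.star_apply, Matrix.map_apply] using this

theorem IsCPMap.comp {A B D : Type*} [NonUnitalSemiring A] [StarRing A]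
    [NonUnitalSemiring B] [StarRing B] [NonUnitalSemiring D] [StarRing D]
    {T : A → B} {S : D → A} (hT : IsCPMap T) (hS : IsCPMap S) :
    IsCPMap (fun d => T (S d)) := by
  intro n x hx
  obtain ⟨z₁, hz₁⟩ := hS n x hx
  obtain ⟨z₂, hz₂⟩ := hT n (x.map S) ⟨z₁, hz₁⟩
  exact ⟨z₂, by rw [← hz₂]; rfl⟩

def phiComb (B : Type*) [CStarAlgebra B] : Matrix (Fin 2) (Fin 2) B →ₗ[ℂ] B where
  toFun m := m 0 0 + m 1 1 - m 0 1 - m 1 0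
  map_add' m n := by simp [Matrix.add_apply]; abel
  map_smul' c m := by simp [Matrix.smul_apply, smul_sub, smul_add]

theorem phiComb_nonneg {A B : Type*} [CStarAlgebra A] [CStarAlgebra B]
    [PartialOrder B] [StarOrderedRing B]
    {That : A →ₗ[ℂ] Matrix (Fin 2) (Fin 2) B} (h : IsCPMap That) {a : A}
    (ha : ∃ y : A, a = star y * y) : 0 ≤ phiComb B (That a) := by
  obtain ⟨w, hw⟩ := h.exists_star_mul_self ha
  have key : phiComb B (That a)
      = star (w 0 0 - w 0 1) * (w 0 0 - w 0 1) + star (w 1 0 - w 1 1) * (w 1 0 - w 1 1) := by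
    simp only [phiComb, LinearMap.coe_mk, AddHom.coe_mk, hw, Matrix.mul_apply,
      Matrix.star_apply, Fin.sum_univ_two, star_sub, sub_mul, mul_sub]
    abel
  rw [key]
  exact add_nonneg (star_mul_self_nonneg _) (star_mul_self_nonneg _)

theorem norm_apply_le {A B : Type*} [CStarAlgebra A] [CStarAlgebra B]
    [PartialOrder A] [StarOrderedRing A] [PartialOrder B] [StarOrderedRing B]
    (Φ : A →ₗ[ℂ] B) (hΦ : ∀ a : A, (∃ y : A, a = star y * y) → 0 ≤ Φ a)
    (c : A) (hc : 0 ≤ c) : ‖Φ c‖ ≤ ‖c‖ * ‖Φ 1‖ := by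
  have exists_sq : ∀ a : A, 0 ≤ a → ∃ y : A, a = star y * y := by
    intro a ha
    exact ⟨CFC.sqrt a, by
      rw [(IsSelfAdjoint.of_nonneg (CFC.sqrt_nonneg _)).star_eq, CFC.sqrt_mul_sqrt_self a ha]⟩
  have hΦc : 0 ≤ Φ c := hΦ c (exists_sq c hc)
  have h1 : c ≤ algebraMap ℝ A ‖c‖ := IsSelfAdjoint.le_algebraMap_norm_self
    (IsSelfAdjoint.of_nonneg hc)
  have hd : (0 : A) ≤ algebraMap ℝ A ‖c‖ - c := sub_nonneg.mpr h1
  have hΦd : 0 ≤ Φ (algebraMap ℝ A ‖c‖ - c) := hΦ _ (exists_sq _ hd)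
  have hsmul : Φ (algebraMap ℝ A ‖c‖) = ‖c‖ • Φ 1 := by
    rw [Algebra.algebraMap_eq_smul_one, LinearMap.map_smul_of_tower]
  have hle : Φ c ≤ ‖c‖ • Φ 1 := by
    rw [map_sub, hsmul] at hΦd
    exact sub_nonneg.mp hΦd
  calc ‖Φ c‖ ≤ ‖‖c‖ • Φ 1‖ := CStarAlgebra.norm_le_norm_of_nonneg_of_le hΦc hle
    _ = ‖c‖ * ‖Φ 1‖ := by rw [norm_smul, Real.norm_of_nonneg (norm_nonneg c)]

def diagExt {A B : Type*} [CStarAlgebra A] [CStarAlgebra B] (T₁ T₂ : A →L[ℂ] B) :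
    A →ₗ[ℂ] Matrix (Fin 2) (Fin 2) B where
  toFun a := Matrix.diagonal ![T₁ a, T₂ a]
  map_add' a b := by
    ext i j
    fin_cases i <;> fin_cases j <;>
      simp [Matrix.diagonal_apply, Matrix.add_apply]
  map_smul' c a := by
    ext i j
    fin_cases i <;> fin_cases j <;>
      simp [Matrix.diagonal_apply, Matrix.smul_apply]

theorem diagExt_cp {A B : Type*} [CStarAlgebra A] [CStarAlgebra B] {T₁ T₂ : A →L[ℂ] B}
    (hT₁ : IsCPMap T₁) (hT₂ : IsCPMap T₂) : IsCPMap (diagExt T₁ T₂) := by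
  intro n x hx
  obtain ⟨z₁, hz₁⟩ := hT₁ n x hx
  obtain ⟨z₂, hz₂⟩ := hT₂ n x hx
  refine ⟨Matrix.of fun k i => Matrix.diagonal ![z₁ k i, z₂ k i], ?_⟩
  ext i j p q
  have h1 : T₁ (x i j) = (star z₁ * z₁) i j := by rw [← hz₁]; rfl
  have h2 : T₂ (x i j) = (star z₂ * z₂) i j := by rw [← hz₂]; rfl
  rw [Matrix.mul_apply] at h1 h2
  fin_cases p <;> fin_cases q <;>
    simp [diagExt, Matrix.map_apply, Matrix.mul_apply, Matrix.star_apply, Matrix.sum_apply,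
      Matrix.diagonal_apply, h1, h2, Fin.sum_univ_two]


theorem stmt9 {A B D : Type*} [CStarAlgebra A] [CStarAlgebra B] [CStarAlgebra D]
    (T₁ T₂ : A →L[ℂ] B) (hT₁ : IsCPMap T₁) (hT₂ : IsCPMap T₂)
    (S : D →L[ℂ] A) (hS : IsCPMap S) :
    buresDist (fun d => T₁ (S d)) (fun d => T₂ (S d)) ≤
      Real.sqrt ‖S‖ * buresDist (⇑T₁) (⇑T₂) := by
  letI : PartialOrder A := CStarAlgebra.spectralOrder A
  letI : StarOrderedRing A := CStarAlgebra.spectralOrderedRing A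
  letI : PartialOrder B := CStarAlgebra.spectralOrder B
  letI : StarOrderedRing B := CStarAlgebra.spectralOrderedRing B
  rw [buresDist, buresDist, ← Real.sqrt_mul (norm_nonneg S)]
  apply Real.sqrt_le_sqrt
  set I := { r : ℝ | ∃ That : A →ₗ[ℂ] Matrix (Fin 2) (Fin 2) B,
    IsCPExtension ⇑T₁ ⇑T₂ That ∧ r = ‖T₁ 1 + T₂ 1 - That 1 0 1 - That 1 1 0‖ } with hIdef
  set J := { r : ℝ | ∃ That : D →ₗ[ℂ] Matrix (Fin 2) (Fin 2) B,
    IsCPExtension (fun d => T₁ (S d)) (fun d => T₂ (S d)) That ∧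
      r = ‖(fun d => T₁ (S d)) 1 + (fun d => T₂ (S d)) 1 - That 1 0 1 - That 1 1 0‖ }
    with hJdef
  have hImem : ‖T₁ 1 + T₂ 1 - diagExt T₁ T₂ 1 0 1 - diagExt T₁ T₂ 1 1 0‖ ∈ I :=
    ⟨diagExt T₁ T₂, ⟨diagExt_cp hT₁ hT₂,
      fun a => by simp [diagExt], fun a => by simp [diagExt]⟩, rfl⟩
  have hJbdd : BddBelow J := ⟨0, by rintro r ⟨That, _, rfl⟩; exact norm_nonneg _⟩
  have him : ‖S‖ * sInf I = sInf (‖S‖ • I) := by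
    rw [← smul_eq_mul, Real.sInf_smul_of_nonneg (norm_nonneg S)]
  rw [him]
  apply le_csInf ⟨_, Set.smul_mem_smul_set hImem⟩
  rintro b ⟨r, hrI, rfl⟩
  show sInf J ≤ ‖S‖ * r
  obtain ⟨That, ⟨hcp, h11, h22⟩, rfl⟩ := hrI
  set Φ : A →ₗ[ℂ] B := (phiComb B).comp That with hΦdef
  have hΦpos : ∀ a : A, (∃ y : A, a = star y * y) → 0 ≤ Φ a :=
    fun a ha => phiComb_nonneg hcp ha
  have hS1 : 0 ≤ S 1 := by
    obtain ⟨w, hw⟩ := hS.exists_star_mul_self (a := (1 : D)) ⟨1, by simp⟩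
    rw [hw]
    exact star_mul_self_nonneg w
  have hcp' : IsCPMap ⇑(That ∘ₗ (S : D →ₗ[ℂ] A)) := hcp.comp hS
  have hmemJ : ‖(fun d => T₁ (S d)) 1 + (fun d => T₂ (S d)) 1
      - (That ∘ₗ (S : D →ₗ[ℂ] A)) 1 0 1 - (That ∘ₗ (S : D →ₗ[ℂ] A)) 1 1 0‖ ∈ J :=
    ⟨That ∘ₗ (S : D →ₗ[ℂ] A), ⟨hcp', fun a => h11 (S a), fun a => h22 (S a)⟩, rfl⟩
  refine (csInf_le hJbdd hmemJ).trans ?_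
  have e1 : (fun d => T₁ (S d)) 1 + (fun d => T₂ (S d)) 1
      - (That ∘ₗ (S : D →ₗ[ℂ] A)) 1 0 1 - (That ∘ₗ (S : D →ₗ[ℂ] A)) 1 1 0 = Φ (S 1) := by
    simp only [hΦdef, phiComb, LinearMap.comp_apply, LinearMap.coe_mk, AddHom.coe_mk,
      ContinuousLinearMap.coe_coe, ← h11 (S 1), ← h22 (S 1)]
  have e2 : T₁ 1 + T₂ 1 - That 1 0 1 - That 1 1 0 = Φ 1 := by
    simp only [hΦdef, phiComb, LinearMap.comp_apply, LinearMap.coe_mk, AddHom.coe_mk,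
      ← h11 1, ← h22 1]
  rw [e1, e2]
  have hS1norm : ‖S 1‖ ≤ ‖S‖ := by
    rcases subsingleton_or_nontrivial D with h | h
    · have : (1 : D) = 0 := Subsingleton.elim _ _
      simp [this]
    · simpa using S.le_opNorm 1
  calc ‖Φ (S 1)‖ ≤ ‖S 1‖ * ‖Φ 1‖ := norm_apply_le Φ hΦpos (S 1) hS1
    _ ≤ ‖S‖ * ‖Φ 1‖ := mul_le_mul_of_nonneg_right hS1norm (norm_nonneg _)
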